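/- Let P be the formal power series in three variables x, y, z over the rationals whose coefficient of x^a y^b z^c equals 1 if a, b, c are positive integers with min(a,b,c) = 1 and max(a,b,c) ≥ 2, and equals 0 otherwise. Then P · (1-x)(1-y)(1-z) = xyz·(1 - xyz) - xyz·(1-x)(1-y)(1-z) as formal power series, i.e., P = xyz·((1-xyz)/((1-x)(1-y)(1-z)) - 1). -/

import Mathlib

open MvPowerSeries
open Finsupp

noncomputable def Aser : MvPowerSeries (Fin 3) ℚ := fun _ => 1

lemma coeff_Aser (d : Fin 3 →₀ ℕ) : MvPowerSeries.coeff d Aser = 1 := rfl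

lemma le_iff3 (m d : Fin 3 →₀ ℕ) : m ≤ d ↔ m 0 ≤ d 0 ∧ m 1 ≤ d 1 ∧ m 2 ≤ d 2 := by
  rw [Finsupp.le_def]
  constructor
  · intro h; exact ⟨h 0, h 1, h 2⟩
  · rintro ⟨h0, h1, h2⟩ i; fin_cases i <;> assumption

lemma eq_iff3 (m d : Fin 3 →₀ ℕ) : m = d ↔ m 0 = d 0 ∧ m 1 = d 1 ∧ m 2 = d 2 := by
  constructor
  · rintro rfl; exact ⟨rfl, rfl, rfl⟩
  · rintro ⟨h0, h1, h2⟩; ext i; fin_cases i <;> assumption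

lemma coeff_Aser_mul_monomial (s d : Fin 3 →₀ ℕ) :
    MvPowerSeries.coeff d (Aser * monomial s 1) = if s ≤ d then 1 else 0 := by
  rw [coeff_mul_monomial]
  split <;> simp [coeff_Aser]

lemma X_as_monomial (i : Fin 3) : (X i : MvPowerSeries (Fin 3) ℚ) = monomial (single i 1) 1 := rfl

lemma XX_as_monomial (i j : Fin 3) :
    (X i * X j : MvPowerSeries (Fin 3) ℚ) = monomial (single i 1 + single j 1) 1 := by
  rw [X_as_monomial, X_as_monomial, MvPowerSeries.monomial_mul_monomial, one_mul]

lemma XXX_as_monomial :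
    (X 0 * X 1 * X 2 : MvPowerSeries (Fin 3) ℚ) =
      monomial (single 0 1 + single 1 1 + single 2 1) 1 := by
  rw [XX_as_monomial, X_as_monomial, MvPowerSeries.monomial_mul_monomial, one_mul]

set_option maxHeartbeats 1000000 in
lemma Aser_mul_D : Aser * ((1 - X 0) * (1 - X 1) * (1 - X 2)) = 1 := by
  have expand : Aser * ((1 - X 0) * (1 - X 1) * (1 - X 2)) =
      Aser * 1 - Aser * X 0 - Aser * X 1 - Aser * X 2 + Aser * (X 0 * X 1) +
        Aser * (X 0 * X 2) + Aser * (X 1 * X 2) - Aser * (X 0 * X 1 * X 2) := by ring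
  rw [expand]
  ext d
  simp only [map_sub, map_add, mul_one]
  rw [XXX_as_monomial, XX_as_monomial, XX_as_monomial, XX_as_monomial,
    X_as_monomial, X_as_monomial, X_as_monomial]
  simp only [coeff_Aser_mul_monomial, MvPowerSeries.coeff_one, coeff_Aser]
  simp only [le_iff3, eq_iff3, Finsupp.add_apply, Finsupp.single_apply, Finsupp.coe_zero,
    Pi.zero_apply]
  norm_num [Fin.ext_iff]
  by_cases h0 : 1 ≤ d 0 <;> by_cases h1 : 1 ≤ d 1 <;> by_cases h2 : 1 ≤ d 2 <;>
    split_ifs <;> (try norm_num) <;> omega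

lemma coeff_monomial_mul_Aser (s d : Fin 3 →₀ ℕ) :
    MvPowerSeries.coeff d (monomial s 1 * Aser) = if s ≤ d then 1 else 0 := by
  rw [MvPowerSeries.coeff_monomial_mul]
  split <;> simp [coeff_Aser]

/-- Lemma 7.6: the generating function `P` for triples `(a,b,c)` of positive integers
with `min(a,b,c) = 1` and `max(a,b,c) ≥ 2` satisfies
`P = xyz·((1-xyz)/((1-x)(1-y)(1-z)) - 1)`, stated denominator-free. -/
theorem single_position_generating_function (P : MvPowerSeries (Fin 3) ℚ)
    (hP : ∀ d : Fin 3 →₀ ℕ,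
      MvPowerSeries.coeff d P =
        if (∀ a : Fin 3, 1 ≤ d a) ∧ (∃ a : Fin 3, d a = 1) ∧ (∃ a : Fin 3, 2 ≤ d a)
        then 1 else 0) :
    P * ((1 - X 0) * (1 - X 1) * (1 - X 2)) =
      X 0 * X 1 * X 2 * (1 - X 0 * X 1 * X 2) -
        X 0 * X 1 * X 2 * ((1 - X 0) * (1 - X 1) * (1 - X 2)) := by
  set M : MvPowerSeries (Fin 3) ℚ := X 0 * X 1 * X 2 with hM
  have hPeq : P = M * Aser - M * (M * Aser) - M := by
    ext d
    rw [hP d, map_sub, map_sub]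
    have hall : (∀ a : Fin 3, 1 ≤ d a) ↔ (1 ≤ d 0 ∧ 1 ≤ d 1 ∧ 1 ≤ d 2) :=
      ⟨fun h => ⟨h 0, h 1, h 2⟩, by rintro ⟨h0, h1, h2⟩ i; fin_cases i <;> assumption⟩
    have hex1 : (∃ a : Fin 3, d a = 1) ↔ (d 0 = 1 ∨ d 1 = 1 ∨ d 2 = 1) := by
      constructor
      · rintro ⟨a, ha⟩; fin_cases a
        exacts [Or.inl ha, Or.inr (Or.inl ha), Or.inr (Or.inr ha)]
      · rintro (h | h | h); exacts [⟨0, h⟩, ⟨1, h⟩, ⟨2, h⟩]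
    have hex2 : (∃ a : Fin 3, 2 ≤ d a) ↔ (2 ≤ d 0 ∨ 2 ≤ d 1 ∨ 2 ≤ d 2) := by
      constructor
      · rintro ⟨a, ha⟩; fin_cases a
        exacts [Or.inl ha, Or.inr (Or.inl ha), Or.inr (Or.inr ha)]
      · rintro (h | h | h); exacts [⟨0, h⟩, ⟨1, h⟩, ⟨2, h⟩]
    have hMA : ∀ e : Fin 3 →₀ ℕ,
        MvPowerSeries.coeff e (M * Aser) = if single 0 1 + single 1 1 + single 2 1 ≤ e
          then 1 else 0 := by
      intro e
      rw [hM, XXX_as_monomial, coeff_monomial_mul_Aser]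
    have hMMA : MvPowerSeries.coeff d (M * (M * Aser)) =
        if single 0 1 + single 1 1 + single 2 1 ≤ d then
          (if single 0 1 + single 1 1 + single 2 1 ≤ d - (single 0 1 + single 1 1 + single 2 1)
            then (1 : ℚ) else 0) else 0 := by
      conv_lhs => rw [hM, XXX_as_monomial]
      rw [MvPowerSeries.coeff_monomial_mul]
      split <;> simp [coeff_monomial_mul_Aser]
    have hMc : MvPowerSeries.coeff d M =
        if d = single 0 1 + single 1 1 + single 2 1 then (1 : ℚ) else 0 := by
      rw [hM, XXX_as_monomial, MvPowerSeries.coeff_monomial]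
    rw [hMA d, hMMA, hMc]
    simp only [hall, hex1, hex2]
    simp only [le_iff3, eq_iff3, Finsupp.add_apply, Finsupp.single_apply, Finsupp.tsub_apply]
    norm_num [Fin.ext_iff]
    split_ifs <;> (try norm_num) <;> omega
  have hAD := Aser_mul_D
  rw [hPeq]
  linear_combination (M - M * M) * hAD
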